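/- Let K be a field, G a finite group whose order is invertible in K, and A a strictly unital A∞-category over K with a strict G-action (a group homomorphism from G into strictly unital strict invertible A∞-endofunctors of A). Then the skew-group construction A*G — with objects {X} for X ∈ Obj(A), morphism spaces Hom({X},{Y}) = ⊕_{g∈G} Hom_A(gX, Y), and higher multiplications μⁿ(aₙ⊗gₙ, …, a₁⊗g₁) = μⁿ_A(aₙ, gₙ·aₙ₋₁, gₙgₙ₋₁·aₙ₋₂, …, gₙ⋯g₂·a₁) ⊗ gₙ⋯g₁ — is again a strictly unital A∞-category; in particular its multiplications satisfy the Stasheff relations and the elements 1_X ⊗ 1_G are strict units. -/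

import Mathlib

/-!
STATEMENT 0: The skew-group construction `A * G` of a strictly unital A∞-category `A`
with a strict action of a finite group `G` (whose order is invertible in the base field `K`)
is again a strictly unital A∞-category.

We model a (strictly unital) A∞-category by:
* a type of objects;
* one total `K`-module `M` of morphisms, together with submodules `hom X Y` (the morphism
  space from `X` to `Y`) and `grade d` (the degree-`d` homogeneous part);
* higher multiplications `mu n : (Fin n → M) → M` (slot `0` is the first morphism applied,
  i.e. `mu n ![a₁, a₂, …, aₙ]` is the paper's `μⁿ(aₙ, …, a₁)`);
* strict units `unit X`.

The predicate `IsAInfty` asserts multilinearity of all `mu n`, compatibility with the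
hom-decomposition and the grading (degree `2 - n`), the Stasheff relations (for tuples of
homogeneous composable morphisms, with the signs `(-1)^{∑_{i ≤ k} ‖aᵢ‖}`), and the strict
unitality axioms.

`skewGroup K G A σ` is the skew-group A∞-category: it has the same objects (the symbols
`{X}`), morphism module `G → A.M` where the component at `g` of a morphism `{X} → {Y}`
lies in `Hom_A(gX, Y)` (so `Hom({X},{Y}) = ⊕_{g ∈ G} Hom_A(gX,Y)`), multiplication
`μⁿ(aₙ⊗gₙ, …, a₁⊗g₁) = μⁿ_A(aₙ, gₙ·aₙ₋₁, gₙgₙ₋₁·aₙ₋₂, …, gₙ⋯g₂·a₁) ⊗ gₙ⋯g₁`,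
and units `1_X ⊗ 1_G`.
-/

set_option autoImplicit false

universe u v

/-- Data of an A∞-category over `K`. -/
structure AInftyData (K : Type) [Field K] where
  Obj : Type
  M : Type
  [addCommGroupM : AddCommGroup M]
  [moduleM : Module K M]
  hom : Obj → Obj → Submodule K M
  grade : ℤ → Submodule K M
  mu : (n : ℕ) → (Fin n → M) → M
  unit : Obj → M

attribute [instance] AInftyData.addCommGroupM AInftyData.moduleM

namespace AInftyData

variable {K : Type} [Field K]

/-- The axioms of a strictly unital A∞-category. -/
structure IsAInfty (A : AInftyData K) : Prop where
  /-- Additivity of `μⁿ` in each slot. -/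
  mu_add : ∀ (n : ℕ) (a : Fin n → A.M) (i : Fin n) (x y : A.M),
    A.mu n (Function.update a i (x + y)) =
      A.mu n (Function.update a i x) + A.mu n (Function.update a i y)
  /-- `K`-homogeneity of `μⁿ` in each slot. -/
  mu_smul : ∀ (n : ℕ) (a : Fin n → A.M) (i : Fin n) (c : K) (x : A.M),
    A.mu n (Function.update a i (c • x)) = c • A.mu n (Function.update a i x)
  /-- `μⁿ` maps composable chains `X₀ → X₁ → ⋯ → Xₙ` to `Hom(X₀, Xₙ)`. -/
  mu_hom : ∀ (n : ℕ) (X : Fin (n + 1) → A.Obj) (a : Fin n → A.M),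
    (∀ i : Fin n, a i ∈ A.hom (X i.castSucc) (X i.succ)) →
    A.mu n a ∈ A.hom (X 0) (X (Fin.last n))
  /-- `μⁿ` has degree `2 - n`. -/
  mu_grade : ∀ (n : ℕ) (d : Fin n → ℤ) (a : Fin n → A.M),
    (∀ i : Fin n, a i ∈ A.grade (d i)) →
    A.mu n a ∈ A.grade ((∑ i, d i) + 2 - n)
  /-- The Stasheff relations, for every tuple of composable homogeneous morphisms:
  `∑_{k+j≤n, j≥1} (-1)^{∑_{i<k} ‖aᵢ‖} μ^{n-j+1}(aₙ,…,a_{k+j+1}, μʲ(a_{k+j},…,a_{k+1}), a_k,…,a₁) = 0`. -/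
  stasheff : ∀ (n : ℕ) (X : Fin (n + 1) → A.Obj) (d : Fin n → ℤ) (a : Fin n → A.M),
    (∀ i : Fin n, a i ∈ A.hom (X i.castSucc) (X i.succ) ⊓ A.grade (d i)) →
    (∑ k ∈ Finset.range (n + 1), ∑ j ∈ Finset.range (n + 1),
      if h : 1 ≤ j ∧ k + j ≤ n then
        ((-1 : K) ^ (∑ i : Fin n, if (i : ℕ) < k then d i - 1 else 0)) •
          A.mu (n - j + 1) (fun i : Fin (n - j + 1) =>
            if hik : (i : ℕ) < k then a ⟨(i : ℕ), by omega⟩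
            else if (i : ℕ) = k then
              A.mu j (fun t : Fin j => a ⟨k + (t : ℕ), by have ht := t.isLt; omega⟩)
            else a ⟨(i : ℕ) + j - 1, by have := i.isLt; omega⟩)
      else 0) = 0
  /-- The unit `1_X` lies in `Hom(X,X)` and has degree `0`. -/
  unit_mem : ∀ X : A.Obj, A.unit X ∈ A.hom X X ⊓ A.grade 0
  /-- `μ¹(1_X) = 0`. -/
  mu_one_unit : ∀ X : A.Obj, A.mu 1 ![A.unit X] = 0
  /-- `μ²(a, 1_X) = a`. -/
  mu_two_unit_right : ∀ (X Y : A.Obj) (a : A.M), a ∈ A.hom X Y →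
    A.mu 2 ![A.unit X, a] = a
  /-- `μ²(1_Y, a) = (-1)^{|a|} a`. -/
  mu_two_unit_left : ∀ (X Y : A.Obj) (d : ℤ) (a : A.M),
    a ∈ A.hom X Y ⊓ A.grade d → A.mu 2 ![a, A.unit Y] = ((-1 : K) ^ d) • a
  /-- `μⁿ` vanishes on units for `n ≥ 3`. -/
  mu_unit_vanish : ∀ (n : ℕ), 3 ≤ n → ∀ (a : Fin n → A.M) (i : Fin n) (X : A.Obj),
    a i = A.unit X → A.mu n a = 0

end AInftyData

/-- A strict action of a group `G` on an A∞-category `A` by strictly unital strict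
invertible A∞-functors. -/
structure StrictAction (K : Type) [Field K] (G : Type) [Group G] (A : AInftyData K) where
  obj : G → A.Obj → A.Obj
  map : G → A.M →ₗ[K] A.M
  obj_one : ∀ X, obj 1 X = X
  obj_mul : ∀ g h X, obj (g * h) X = obj g (obj h X)
  map_one : map 1 = LinearMap.id
  map_mul : ∀ g h, map (g * h) = (map g).comp (map h)
  map_hom : ∀ (g : G) (X Y : A.Obj) (a : A.M), a ∈ A.hom X Y →
    map g a ∈ A.hom (obj g X) (obj g Y)
  map_grade : ∀ (g : G) (d : ℤ) (a : A.M), a ∈ A.grade d → map g a ∈ A.grade d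
  map_mu : ∀ (g : G) (n : ℕ) (a : Fin n → A.M),
    map g (A.mu n a) = A.mu n (fun i => map g (a i))
  map_unit : ∀ (g : G) (X : A.Obj), map g (A.unit X) = A.unit (obj g X)

section SkewGroup

variable (K : Type) [Field K] (G : Type) [Group G] [Fintype G] [DecidableEq G]

/-- The ordered product `gₙ ⋯ g₁` (slot `0` of the tuple is `g₁`). -/
def ordProd {n : ℕ} (g : Fin n → G) : G := ((List.ofFn g).reverse).prod

/-- The partial product `gₙ ⋯ g_{i+2}` acting on the morphism in slot `i`. -/
def suffixProd {n : ℕ} (g : Fin n → G) (i : Fin n) : G :=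
  (((List.ofFn g).drop ((i : ℕ) + 1)).reverse).prod

/-- The skew-group A∞-category `A * G`:  objects are the symbols `{X}` for `X ∈ Obj A`,
`Hom({X},{Y}) = ⊕_{g ∈ G} Hom_A(gX, Y)` and
`μⁿ(aₙ⊗gₙ, …, a₁⊗g₁) = μⁿ_A(aₙ, gₙ·aₙ₋₁, …, gₙ⋯g₂·a₁) ⊗ gₙ⋯g₁`. -/
@[reducible] def skewGroup (A : AInftyData K) (σ : StrictAction K G A) : AInftyData K where
  Obj := A.Obj
  M := G → A.M
  hom X Y := Submodule.pi Set.univ (fun g => A.hom (σ.obj g X) Y)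
  grade d := Submodule.pi Set.univ (fun _ => A.grade d)
  mu n f := fun h => ∑ g : Fin n → G,
    if ordProd G g = h then
      A.mu n (fun i => σ.map (suffixProd G g i) (f i (g i)))
    else 0
  unit X := fun g => if g = 1 then A.unit X else 0

end SkewGroup

/-! ### Auxiliary lemmas: suffix products -/

section PF
variable {G : Type} [Group G]

/-- The product `g_{n-1} ⋯ g_s`. -/
def pf {n : ℕ} (g : Fin n → G) (s : ℕ) : G := (((List.ofFn g).drop s).reverse).prod

lemma pf_le {n : ℕ} (g : Fin n → G) {s : ℕ} (h : n ≤ s) : pf g s = 1 := by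
  rw [pf, List.drop_eq_nil_of_le (by simpa using h)]; simp

lemma pf_lt {n : ℕ} (g : Fin n → G) {s : ℕ} (h : s < n) :
    pf g s = pf g (s + 1) * g ⟨s, h⟩ := by
  rw [pf, List.drop_eq_getElem_cons (by simpa using h), List.reverse_cons, List.prod_append]
  simp [pf]

lemma ordProd_eq_pf {n : ℕ} (g : Fin n → G) : ordProd G g = pf g 0 := rfl

lemma suffixProd_eq_pf {n : ℕ} (g : Fin n → G) (i : Fin n) :
    suffixProd G g i = pf g ((i : ℕ) + 1) := rfl

/-- The subtuple `(g_k, …, g_{k+j-1})`. -/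
def subg {n : ℕ} (k j : ℕ) (hkj : k + j ≤ n) (g : Fin n → G) : Fin j → G :=
  fun t => g ⟨k + (t : ℕ), by have := t.isLt; omega⟩

/-- The contracted tuple, where slots `k, …, k+j-1` are replaced by their ordered product. -/
def cOf {n : ℕ} (k j : ℕ) (hj : 1 ≤ j) (hkj : k + j ≤ n) (g : Fin n → G) :
    Fin (n - j + 1) → G :=
  fun i => if h : (i : ℕ) < k then g ⟨i, by omega⟩
    else if (i : ℕ) = k then ordProd G (subg k j hkj g)
    else g ⟨(i : ℕ) + j - 1, by have := i.isLt; omega⟩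

/-- Splicing a `j`-tuple into slot `k` of a contracted tuple. -/
def splice {n : ℕ} (k j : ℕ) (hj : 1 ≤ j) (hkj : k + j ≤ n)
    (c : Fin (n - j + 1) → G) (g' : Fin j → G) : Fin n → G :=
  fun i => if h : (i : ℕ) < k then c ⟨i, by omega⟩
    else if h2 : (i : ℕ) < k + j then g' ⟨(i : ℕ) - k, by omega⟩
    else c ⟨(i : ℕ) - j + 1, by have := i.isLt; omega⟩

lemma pf_subg {n : ℕ} (k j : ℕ) (hkj : k + j ≤ n) (g : Fin n → G) :
    ∀ (t : ℕ), t ≤ j → pf g (k + t) = pf g (k + j) * pf (subg k j hkj g) t := by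
  suffices h : ∀ (u t : ℕ), t + u = j → pf g (k + t) = pf g (k + j) * pf (subg k j hkj g) t by
    intro t ht; exact h (j - t) t (by omega)
  intro u
  induction u with
  | zero =>
    intro t ht
    have : t = j := by omega
    subst this
    rw [pf_le (subg k t hkj g) (le_refl t), mul_one]
  | succ u ih =>
    intro t ht
    have h1 : k + t < n := by omega
    have h2 : t < j := by omega
    rw [pf_lt g h1, pf_lt (subg k j hkj g) h2]
    rw [show k + t + 1 = k + (t + 1) from rfl, ih (t + 1) (by omega), mul_assoc]
    rfl

lemma pf_cOf_high {n : ℕ} (k j : ℕ) (hj : 1 ≤ j) (hkj : k + j ≤ n) (g : Fin n → G) :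
    ∀ (s : ℕ), k < s → s ≤ n - j + 1 →
    pf (cOf k j hj hkj g) s = pf g (s + j - 1) := by
  suffices h : ∀ (u s : ℕ), k < s → s + u = n - j + 1 →
      pf (cOf k j hj hkj g) s = pf g (s + j - 1) by
    intro s hs1 hs2; exact h (n - j + 1 - s) s hs1 (by omega)
  intro u
  induction u with
  | zero =>
    intro s hs1 hs2
    rw [pf_le _ (by omega), pf_le _ (by omega)]
  | succ u ih =>
    intro s hs1 hs2
    have h1 : s < n - j + 1 := by omega
    have h2 : s + j - 1 < n := by omega
    rw [pf_lt (cOf k j hj hkj g) h1, pf_lt g h2, ih (s + 1) (by omega) (by omega)]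
    have e1 : s + 1 + j - 1 = s + j - 1 + 1 := by omega
    rw [e1]
    congr 1
    simp only [cOf]
    rw [dif_neg (by omega), if_neg (by omega)]

lemma pf_cOf_low {n : ℕ} (k j : ℕ) (hj : 1 ≤ j) (hkj : k + j ≤ n) (g : Fin n → G) :
    ∀ (s : ℕ), s ≤ k → pf (cOf k j hj hkj g) s = pf g s := by
  suffices h : ∀ (u s : ℕ), s + u = k → pf (cOf k j hj hkj g) s = pf g s by
    intro s hs; exact h (k - s) s (by omega)
  intro u
  induction u with
  | zero =>
    intro s hs
    have hsk : s = k := by omega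
    subst hsk
    rw [pf_lt (cOf s j hj hkj g) (show s < n - j + 1 by omega)]
    rw [pf_cOf_high s j hj hkj g (s + 1) (by omega) (by omega)]
    have e1 : s + 1 + j - 1 = s + j := by omega
    rw [e1]
    have e2 : pf g s = pf g (s + 0) := rfl
    rw [e2, pf_subg s j hkj g 0 (by omega)]
    congr 1
    simp only [cOf, Fin.val_mk]
    rw [dif_neg (by omega), if_pos trivial, ordProd_eq_pf]
  | succ u ih =>
    intro s hs
    have h1 : s < n - j + 1 := by omega
    have h2 : s < n := by omega
    rw [pf_lt (cOf k j hj hkj g) h1, pf_lt g h2, ih (s + 1) (by omega)]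
    congr 1
    simp only [cOf]
    rw [dif_pos (by omega)]

lemma ordProd_cOf {n : ℕ} (k j : ℕ) (hj : 1 ≤ j) (hkj : k + j ≤ n) (g : Fin n → G) :
    ordProd G (cOf k j hj hkj g) = ordProd G g := by
  rw [ordProd_eq_pf, ordProd_eq_pf, pf_cOf_low k j hj hkj g 0 (by omega)]

lemma splice_roundtrip {n : ℕ} (k j : ℕ) (hj : 1 ≤ j) (hkj : k + j ≤ n) (g : Fin n → G) :
    splice k j hj hkj (cOf k j hj hkj g) (subg k j hkj g) = g := by
  funext i
  simp only [splice, cOf, subg, Fin.val_mk]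
  by_cases h : (i : ℕ) < k
  · rw [dif_pos h, dif_pos h]
  · rw [dif_neg h]
    by_cases h2 : (i : ℕ) < k + j
    · rw [dif_pos h2]
      congr 1
      exact Fin.ext (by simp only [Fin.val_mk]; omega)
    · rw [dif_neg h2]
      have hi := i.isLt
      rw [dif_neg (show ¬ ((i:ℕ) - j + 1 < k) by omega),
        if_neg (show ¬ ((i:ℕ) - j + 1 = k) by omega)]
      congr 1
      exact Fin.ext (by simp only [Fin.val_mk]; omega)

lemma subg_splice {n : ℕ} (k j : ℕ) (hj : 1 ≤ j) (hkj : k + j ≤ n)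
    (c : Fin (n - j + 1) → G) (g' : Fin j → G) :
    subg k j hkj (splice k j hj hkj c g') = g' := by
  funext t
  have ht := t.isLt
  simp only [subg, splice, Fin.val_mk]
  rw [dif_neg (show ¬ (k + (t:ℕ) < k) by omega), dif_pos (show k + (t:ℕ) < k + j by omega)]
  congr 1
  exact Fin.ext (by simp only [Fin.val_mk]; omega)

lemma cOf_splice {n : ℕ} (k j : ℕ) (hj : 1 ≤ j) (hkj : k + j ≤ n)
    (c : Fin (n - j + 1) → G) (g' : Fin j → G)
    (hc : ordProd G g' = c ⟨k, by omega⟩) :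
    cOf k j hj hkj (splice k j hj hkj c g') = c := by
  funext i
  have hi := i.isLt
  simp only [cOf, Fin.val_mk]
  by_cases h : (i : ℕ) < k
  · rw [dif_pos h]
    simp only [splice, Fin.val_mk]
    rw [dif_pos h]
  · rw [dif_neg h]
    by_cases h2 : (i : ℕ) = k
    · rw [if_pos h2, subg_splice k j hj hkj c g', hc]
      congr 1
      exact Fin.ext h2.symm
    · rw [if_neg h2]
      simp only [splice, Fin.val_mk]
      rw [dif_neg (show ¬ ((i:ℕ) + j - 1 < k) by omega),
        dif_neg (show ¬ ((i:ℕ) + j - 1 < k + j) by omega)]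
      congr 1
      exact Fin.ext (by simp only [Fin.val_mk]; omega)

end PF

/-! ### Auxiliary lemmas: linearity consequences -/

section MuLin
variable {K : Type} [Field K] {A : AInftyData K}

lemma mu_update_zero (hA : A.IsAInfty) (n : ℕ) (b : Fin n → A.M) (i : Fin n) :
    A.mu n (Function.update b i 0) = 0 := by
  have h := hA.mu_add n b i 0 0
  rw [add_zero] at h
  exact left_eq_add.mp h

lemma mu_slot_zero (hA : A.IsAInfty) {n : ℕ} (b : Fin n → A.M) (i : Fin n)
    (hb : b i = 0) : A.mu n b = 0 := by
  have hb2 : b = Function.update b i 0 := by rw [← hb, Function.update_eq_self]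
  rw [hb2, mu_update_zero hA]

lemma mu_update_sum (hA : A.IsAInfty) {n : ℕ} (b : Fin n → A.M) (i : Fin n)
    {ι : Type} [DecidableEq ι] (s : Finset ι) (w : ι → A.M) :
    A.mu n (Function.update b i (∑ x ∈ s, w x)) =
      ∑ x ∈ s, A.mu n (Function.update b i (w x)) := by
  induction s using Finset.induction_on with
  | empty => simpa using mu_update_zero hA n b i
  | insert _ _ hx ih => rw [Finset.sum_insert hx, hA.mu_add, ih, Finset.sum_insert hx]

lemma mu_slot_sum (hA : A.IsAInfty) {n : ℕ} (b : Fin n → A.M) (i : Fin n)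
    {ι : Type} [DecidableEq ι] (s : Finset ι) (w : ι → A.M)
    (hb : b i = ∑ x ∈ s, w x) :
    A.mu n b = ∑ x ∈ s, A.mu n (Function.update b i (w x)) := by
  have hb2 : b = Function.update b i (∑ x ∈ s, w x) := by
    rw [← hb, Function.update_eq_self]
  rw [hb2, mu_update_sum hA]
  apply Finset.sum_congr rfl
  intro x _
  rw [Function.update_idem]

lemma mu_congr_add (hA : A.IsAInfty) {n : ℕ} (b b1 b2 : Fin n → A.M) (i : Fin n)
    (hoff : ∀ l, l ≠ i → b l = b1 l ∧ b l = b2 l) (hi : b i = b1 i + b2 i) :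
    A.mu n b = A.mu n b1 + A.mu n b2 := by
  have e : b = Function.update b1 i (b1 i + b2 i) := by
    funext l
    by_cases hl : l = i
    · subst hl; rw [Function.update_self, hi]
    · rw [Function.update_of_ne hl]; exact (hoff l hl).1
  have e2 : b2 = Function.update b1 i (b2 i) := by
    funext l
    by_cases hl : l = i
    · subst hl; rw [Function.update_self]
    · rw [Function.update_of_ne hl]
      rw [← (hoff l hl).1, (hoff l hl).2]
  rw [e, hA.mu_add, Function.update_eq_self, ← e2]

lemma mu_congr_smul (hA : A.IsAInfty) {n : ℕ} (b b1 : Fin n → A.M) (i : Fin n) (c : K)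
    (hoff : ∀ l, l ≠ i → b l = b1 l) (hi : b i = c • b1 i) :
    A.mu n b = c • A.mu n b1 := by
  have e : b = Function.update b1 i (c • b1 i) := by
    funext l
    by_cases hl : l = i
    · subst hl; rw [Function.update_self, hi]
    · rw [Function.update_of_ne hl]; exact hoff l hl
  rw [e, hA.mu_smul, Function.update_eq_self]

end MuLin

/-! ### Auxiliary lemmas: the skew-group multiplication -/

section SkewAux
variable {K : Type} [Field K] {G : Type} [Group G] [Fintype G] [DecidableEq G]
variable {A : AInftyData K} (σ : StrictAction K G A)

lemma skew_mu_apply (n : ℕ) (f : Fin n → (G → A.M)) (h : G) :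
    (skewGroup K G A σ).mu n f h = ∑ g : Fin n → G,
      if ordProd G g = h then
        A.mu n (fun i => σ.map (suffixProd G g i) (f i (g i))) else 0 := rfl

lemma map_map (p q : G) (x : A.M) : σ.map p (σ.map q x) = σ.map (p * q) x := by
  rw [σ.map_mul]; rfl

lemma cOf_at_k {n : ℕ} (k j : ℕ) (hj : 1 ≤ j) (hkj : k + j ≤ n) (g : Fin n → G)
    (hkm : k < n - j + 1) :
    cOf k j hj hkj g ⟨k, hkm⟩ = ordProd G (subg k j hkj g) := by
  simp only [cOf, Fin.val_mk]
  rw [dif_neg (lt_irrefl k), if_pos trivial]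

/-- The key term identity for the Stasheff relation of the skew-group category. -/
lemma update_term_eq {n k j : ℕ} (hj : 1 ≤ j) (hkj : k + j ≤ n) (hkm : k < n - j + 1)
    (a : Fin n → (G → A.M)) (F : Fin (n - j + 1) → (G → A.M))
    (hFlow : ∀ (i : Fin (n - j + 1)) (hik : (i : ℕ) < k), F i = a ⟨(i : ℕ), by omega⟩)
    (hFhigh : ∀ (i : Fin (n - j + 1)), ¬ (i : ℕ) < k → (i : ℕ) ≠ k →
      F i = a ⟨(i : ℕ) + j - 1, by have := i.isLt; omega⟩)
    (c : Fin (n - j + 1) → G) (g' : Fin j → G) (hc : ordProd G g' = c ⟨k, hkm⟩) :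
    Function.update (fun i => σ.map (suffixProd G c i) (F i (c i))) ⟨k, hkm⟩
        (A.mu j (fun t : Fin j => σ.map (suffixProd G c ⟨k, hkm⟩ * suffixProd G g' t)
          (a ⟨k + (t : ℕ), by have := t.isLt; omega⟩ (g' t))))
    = fun i : Fin (n - j + 1) =>
        if hik : (i : ℕ) < k then
          σ.map (suffixProd G (splice k j hj hkj c g') ⟨(i : ℕ), by omega⟩)
            (a ⟨(i : ℕ), by omega⟩ (splice k j hj hkj c g' ⟨(i : ℕ), by omega⟩))
        else if (i : ℕ) = k then
          A.mu j (fun t : Fin j =>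
            σ.map (suffixProd G (splice k j hj hkj c g') ⟨k + (t : ℕ), by have := t.isLt; omega⟩)
              (a ⟨k + (t : ℕ), by have := t.isLt; omega⟩
                (splice k j hj hkj c g' ⟨k + (t : ℕ), by have := t.isLt; omega⟩)))
        else
          σ.map (suffixProd G (splice k j hj hkj c g') ⟨(i : ℕ) + j - 1, by have := i.isLt; omega⟩)
            (a ⟨(i : ℕ) + j - 1, by have := i.isLt; omega⟩
              (splice k j hj hkj c g' ⟨(i : ℕ) + j - 1, by have := i.isLt; omega⟩)) := by
  set gg := splice k j hj hkj c g' with hgg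
  have hcc : c = cOf k j hj hkj gg := (cOf_splice k j hj hkj c g' hc).symm
  have hgs : subg k j hkj gg = g' := subg_splice k j hj hkj c g'
  funext i
  by_cases hik : (i : ℕ) < k
  · have hne : i ≠ (⟨k, hkm⟩ : Fin (n - j + 1)) := by
      intro e; rw [e] at hik; exact lt_irrefl k hik
    rw [Function.update_of_ne hne, dif_pos hik, hFlow i hik]
    have e1 : suffixProd G c i = suffixProd G gg ⟨(i : ℕ), by omega⟩ := by
      rw [suffixProd_eq_pf, suffixProd_eq_pf, hcc,
        pf_cOf_low k j hj hkj gg ((i : ℕ) + 1) (by omega)]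
    have e2 : c i = gg ⟨(i : ℕ), by omega⟩ := by
      rw [hcc]; simp only [cOf]; rw [dif_pos hik]
    rw [e1, e2]
  · by_cases hik2 : (i : ℕ) = k
    · have hieq : i = (⟨k, hkm⟩ : Fin (n - j + 1)) := Fin.ext hik2
      subst hieq
      rw [Function.update_self, dif_neg hik, if_pos hik2]
      congr 1
      funext t
      have ht := t.isLt
      have e5 : suffixProd G c ⟨k, hkm⟩ * suffixProd G g' t
          = suffixProd G gg ⟨k + (t : ℕ), by omega⟩ := by
        rw [suffixProd_eq_pf, suffixProd_eq_pf, suffixProd_eq_pf, hcc,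
          pf_cOf_high k j hj hkj gg (((⟨k, hkm⟩ : Fin (n - j + 1)) : ℕ) + 1) (by simp only [Fin.val_mk]; omega) (by simp only [Fin.val_mk]; omega)]
        have e5a : ((⟨k, hkm⟩ : Fin (n - j + 1)) : ℕ) + 1 + j - 1 = k + j := by
          simp only [Fin.val_mk]; omega
        rw [e5a]
        have e5b := pf_subg k j hkj gg ((t : ℕ) + 1) (by omega)
        rw [hgs] at e5b
        exact e5b.symm
      have e6 : gg ⟨k + (t : ℕ), by omega⟩ = g' t := congrFun hgs t
      rw [e5, e6]
    · have hne : i ≠ (⟨k, hkm⟩ : Fin (n - j + 1)) := by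
        intro e; rw [e] at hik2; exact hik2 rfl
      rw [Function.update_of_ne hne, dif_neg hik, if_neg hik2, hFhigh i hik hik2]
      have hi := i.isLt
      have e3 : suffixProd G c i = suffixProd G gg ⟨(i : ℕ) + j - 1, by omega⟩ := by
        rw [suffixProd_eq_pf, suffixProd_eq_pf, hcc,
          pf_cOf_high k j hj hkj gg ((i : ℕ) + 1) (by omega) (by omega)]
        congr 1
        simp only [Fin.val_mk]
        omega
      have e4 : c i = gg ⟨(i : ℕ) + j - 1, by omega⟩ := by
        rw [hcc]; simp only [cOf]; rw [dif_neg hik, if_neg hik2]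
      rw [e3, e4]

/-- The core computation: the `(k,j)`-term of the skew Stasheff sum, evaluated at `h`,
regrouped as a sum over tuples `g : Fin n → G`. -/
lemma skew_core (hA : A.IsAInfty) (n k j : ℕ) (hj : 1 ≤ j) (hkj : k + j ≤ n)
    (a : Fin n → (G → A.M)) (h : G) :
    (skewGroup K G A σ).mu (n - j + 1) (fun i : Fin (n - j + 1) =>
        if hik : (i : ℕ) < k then a ⟨(i : ℕ), by omega⟩
        else if (i : ℕ) = k then
          (skewGroup K G A σ).mu j
            (fun t : Fin j => a ⟨k + (t : ℕ), by have := t.isLt; omega⟩)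
        else a ⟨(i : ℕ) + j - 1, by have := i.isLt; omega⟩) h
    = ∑ g : Fin n → G, if ordProd G g = h then
        A.mu (n - j + 1) (fun i : Fin (n - j + 1) =>
          if hik : (i : ℕ) < k then
            σ.map (suffixProd G g ⟨(i : ℕ), by omega⟩)
              (a ⟨(i : ℕ), by omega⟩ (g ⟨(i : ℕ), by omega⟩))
          else if (i : ℕ) = k then
            A.mu j (fun t : Fin j =>
              σ.map (suffixProd G g ⟨k + (t : ℕ), by have := t.isLt; omega⟩)
                (a ⟨k + (t : ℕ), by have := t.isLt; omega⟩
                  (g ⟨k + (t : ℕ), by have := t.isLt; omega⟩)))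
          else
            σ.map (suffixProd G g ⟨(i : ℕ) + j - 1, by have := i.isLt; omega⟩)
              (a ⟨(i : ℕ) + j - 1, by have := i.isLt; omega⟩
                (g ⟨(i : ℕ) + j - 1, by have := i.isLt; omega⟩))) else 0 := by
  have hkm : k < n - j + 1 := by omega
  rw [skew_mu_apply]
  -- the dite-argument function
  set F : Fin (n - j + 1) → (G → A.M) := fun i =>
    if hik : (i : ℕ) < k then a ⟨(i : ℕ), by omega⟩
    else if (i : ℕ) = k then
      (skewGroup K G A σ).mu j (fun t : Fin j => a ⟨k + (t : ℕ), by have := t.isLt; omega⟩)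
    else a ⟨(i : ℕ) + j - 1, by have := i.isLt; omega⟩ with hF
  have hFlow : ∀ (i : Fin (n - j + 1)) (hik : (i : ℕ) < k), F i = a ⟨(i : ℕ), by omega⟩ := by
    intro i hik; rw [hF]; simp only []; rw [dif_pos hik]
  have hFk : F ⟨k, hkm⟩ = (skewGroup K G A σ).mu j
      (fun t : Fin j => a ⟨k + (t : ℕ), by have := t.isLt; omega⟩) := by
    rw [hF]; simp only [Fin.val_mk]; rw [dif_neg (lt_irrefl k), if_pos trivial]
  have hFhigh : ∀ (i : Fin (n - j + 1)), ¬ (i : ℕ) < k → (i : ℕ) ≠ k →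
      F i = a ⟨(i : ℕ) + j - 1, by have := i.isLt; omega⟩ := by
    intro i h1 h2; rw [hF]; simp only []; rw [dif_neg h1, if_neg h2]
  -- step 1: expand the inner skew multiplication in slot k
  have key : ∀ c : Fin (n - j + 1) → G,
      A.mu (n - j + 1) (fun i => σ.map (suffixProd G c i) (F i (c i)))
      = ∑ g' : Fin j → G, if ordProd G g' = c ⟨k, hkm⟩ then
          A.mu (n - j + 1) (Function.update
            (fun i => σ.map (suffixProd G c i) (F i (c i))) ⟨k, hkm⟩
            (A.mu j (fun t : Fin j =>
              σ.map (suffixProd G c ⟨k, hkm⟩ * suffixProd G g' t)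
                (a ⟨k + (t : ℕ), by have := t.isLt; omega⟩ (g' t))))) else 0 := by
    intro c
    have hEk : σ.map (suffixProd G c ⟨k, hkm⟩) (F ⟨k, hkm⟩ (c ⟨k, hkm⟩))
        = ∑ g' : Fin j → G, if ordProd G g' = c ⟨k, hkm⟩ then
            A.mu j (fun t : Fin j =>
              σ.map (suffixProd G c ⟨k, hkm⟩ * suffixProd G g' t)
                (a ⟨k + (t : ℕ), by have := t.isLt; omega⟩ (g' t))) else 0 := by
      rw [hFk, skew_mu_apply, map_sum]
      apply Finset.sum_congr rfl
      intro g' _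
      by_cases hg' : ordProd G g' = c ⟨k, hkm⟩
      · rw [if_pos hg', if_pos hg', σ.map_mu]
        congr 1
        funext t
        exact map_map σ _ _ _
      · rw [if_neg hg', if_neg hg', map_zero]
    rw [mu_slot_sum hA (fun i => σ.map (suffixProd G c i) (F i (c i))) ⟨k, hkm⟩
      Finset.univ _ hEk]
    apply Finset.sum_congr rfl
    intro g' _
    by_cases hg' : ordProd G g' = c ⟨k, hkm⟩
    · rw [if_pos hg', if_pos hg']
    · rw [if_neg hg', if_neg hg']
      exact mu_slot_zero hA _ ⟨k, hkm⟩ (Function.update_self _ _ _)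
  -- step 2: regroup the double sum as a single sum over `g : Fin n → G`
  calc
    ∑ c : Fin (n - j + 1) → G, (if ordProd G c = h then
        A.mu (n - j + 1) (fun i => σ.map (suffixProd G c i) (F i (c i))) else 0)
      = ∑ c : Fin (n - j + 1) → G, ∑ g' : Fin j → G,
          (if ordProd G c = h ∧ ordProd G g' = c ⟨k, hkm⟩ then
            A.mu (n - j + 1) (Function.update
              (fun i => σ.map (suffixProd G c i) (F i (c i))) ⟨k, hkm⟩
              (A.mu j (fun t : Fin j =>
                σ.map (suffixProd G c ⟨k, hkm⟩ * suffixProd G g' t)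
                  (a ⟨k + (t : ℕ), by have := t.isLt; omega⟩ (g' t))))) else 0) := by
        apply Finset.sum_congr rfl
        intro c _
        by_cases hc : ordProd G c = h
        · rw [if_pos hc, key c]
          apply Finset.sum_congr rfl
          intro g' _
          by_cases hg' : ordProd G g' = c ⟨k, hkm⟩
          · rw [if_pos hg', if_pos ⟨hc, hg'⟩]
          · rw [if_neg hg', if_neg (fun hpq => hg' hpq.2)]
        · rw [if_neg hc]
          symm
          apply Finset.sum_eq_zero
          intro g' _
          rw [if_neg (fun hpq => hc hpq.1)]
    _ = ∑ g : Fin n → G, if ordProd G g = h then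
          A.mu (n - j + 1) (fun i : Fin (n - j + 1) =>
            if hik : (i : ℕ) < k then
              σ.map (suffixProd G g ⟨(i : ℕ), by omega⟩)
                (a ⟨(i : ℕ), by omega⟩ (g ⟨(i : ℕ), by omega⟩))
            else if (i : ℕ) = k then
              A.mu j (fun t : Fin j =>
                σ.map (suffixProd G g ⟨k + (t : ℕ), by have := t.isLt; omega⟩)
                  (a ⟨k + (t : ℕ), by have := t.isLt; omega⟩
                    (g ⟨k + (t : ℕ), by have := t.isLt; omega⟩)))
            else
              σ.map (suffixProd G g ⟨(i : ℕ) + j - 1, by have := i.isLt; omega⟩)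
                (a ⟨(i : ℕ) + j - 1, by have := i.isLt; omega⟩
                  (g ⟨(i : ℕ) + j - 1, by have := i.isLt; omega⟩))) else 0 := by
        rw [← Finset.sum_product']
        rw [← Finset.sum_filter, ← Finset.sum_filter]
        refine Finset.sum_nbij' (fun p => splice k j hj hkj p.1 p.2)
          (fun g => (cOf k j hj hkj g, subg k j hkj g)) ?_ ?_ ?_ ?_ ?_
        · intro p hp
          rw [Finset.mem_filter] at hp ⊢
          obtain ⟨-, hp1, hp2⟩ := hp
          refine ⟨Finset.mem_univ _, ?_⟩
          have h1 := ordProd_cOf k j hj hkj (splice k j hj hkj p.1 p.2)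
          rw [cOf_splice k j hj hkj p.1 p.2 hp2] at h1
          rw [← h1, hp1]
        · intro g hg
          rw [Finset.mem_filter] at hg ⊢
          obtain ⟨-, hg1⟩ := hg
          refine ⟨Finset.mem_product.mpr ⟨Finset.mem_univ _, Finset.mem_univ _⟩, ?_, ?_⟩
          · rw [ordProd_cOf k j hj hkj g]; exact hg1
          · exact (cOf_at_k k j hj hkj g hkm).symm
        · intro p hp
          rw [Finset.mem_filter] at hp
          obtain ⟨-, hp1, hp2⟩ := hp
          exact Prod.ext (cOf_splice k j hj hkj p.1 p.2 hp2) (subg_splice k j hj hkj p.1 p.2)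
        · intro g hg
          exact splice_roundtrip k j hj hkj g
        · intro p hp
          rw [Finset.mem_filter] at hp
          obtain ⟨-, hp1, hp2⟩ := hp
          rw [update_term_eq σ hj hkj hkm a F hFlow hFhigh p.1 p.2 hp2]

end SkewAux

section MainAux
variable {K : Type} [Field K] {G : Type} [Group G] [Fintype G] [DecidableEq G]
variable {A : AInftyData K} (σ : StrictAction K G A)

lemma skew_unit_apply (X : A.Obj) (γ : G) :
    (skewGroup K G A σ).unit X γ = if γ = 1 then A.unit X else 0 := rfl

lemma skew_chain_mem (hA : A.IsAInfty) {n : ℕ} (X : Fin (n + 1) → A.Obj)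
    (a : Fin n → (G → A.M))
    (ha : ∀ i : Fin n, a i ∈ (skewGroup K G A σ).hom (X i.castSucc) (X i.succ))
    (g : Fin n → G) (i : Fin n) :
    σ.map (suffixProd G g i) (a i (g i)) ∈
      A.hom (σ.obj (pf g ((i.castSucc : Fin (n + 1)) : ℕ)) (X i.castSucc))
        (σ.obj (pf g ((i.succ : Fin (n + 1)) : ℕ)) (X i.succ)) := by
  have hmem : a i (g i) ∈ A.hom (σ.obj (g i) (X i.castSucc)) (X i.succ) := by
    have h := ha i
    rw [Submodule.mem_pi] at h
    exact h (g i) (Set.mem_univ _)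
  have h1 := σ.map_hom (suffixProd G g i) _ _ _ hmem
  rw [← σ.obj_mul] at h1
  have e2 : suffixProd G g i * g i = pf g ((i.castSucc : Fin (n + 1)) : ℕ) := by
    rw [suffixProd_eq_pf, Fin.coe_castSucc, pf_lt g i.isLt]
  have e3 : suffixProd G g i = pf g ((i.succ : Fin (n + 1)) : ℕ) := by
    rw [suffixProd_eq_pf, Fin.val_succ]
  rw [e2, e3] at h1
  exact h1

/-- The `(k,j,g)`-term of the regrouped skew Stasheff sum. -/
def stashTerm (σ : StrictAction K G A) (n : ℕ) (d : Fin n → ℤ) (a : Fin n → (G → A.M))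
    (h : G) (k j : ℕ) (g : Fin n → G) : A.M :=
  if hc : 1 ≤ j ∧ k + j ≤ n then
    (if ordProd G g = h then
      ((-1 : K) ^ (∑ i : Fin n, if (i : ℕ) < k then d i - 1 else 0)) •
        A.mu (n - j + 1) (fun i : Fin (n - j + 1) =>
          if hik : (i : ℕ) < k then
            σ.map (suffixProd G g ⟨(i : ℕ), by omega⟩)
              (a ⟨(i : ℕ), by omega⟩ (g ⟨(i : ℕ), by omega⟩))
          else if (i : ℕ) = k then
            A.mu j (fun t : Fin j =>
              σ.map (suffixProd G g ⟨k + (t : ℕ), by have := t.isLt; omega⟩)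
                (a ⟨k + (t : ℕ), by have := t.isLt; omega⟩
                  (g ⟨k + (t : ℕ), by have := t.isLt; omega⟩)))
          else
            σ.map (suffixProd G g ⟨(i : ℕ) + j - 1, by have := i.isLt; omega⟩)
              (a ⟨(i : ℕ) + j - 1, by have := i.isLt; omega⟩
                (g ⟨(i : ℕ) + j - 1, by have := i.isLt; omega⟩)))
     else 0)
  else 0

end MainAux

/-- If `A` is a strictly unital A∞-category over `K`, `G` is a finite group
whose order is invertible in `K`, acting strictly on `A`, then the skew-group category
`A * G` is again a strictly unital A∞-category (its multiplications are multilinear,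
respect the hom and degree decompositions, satisfy the Stasheff relations, and the
elements `1_X ⊗ 1_G` are strict units). -/
theorem skewGroup_isAInfty (K : Type) [Field K] (G : Type) [Group G] [Fintype G]
    [DecidableEq G] (hcard : (Fintype.card G : K) ≠ 0)
    (A : AInftyData K) (hA : A.IsAInfty) (σ : StrictAction K G A) :
    (skewGroup K G A σ).IsAInfty ∧
      (∀ (X : A.Obj) (g : G),
        (skewGroup K G A σ).unit X g = if g = 1 then A.unit X else 0) := by
  classical
  refine ⟨⟨?_, ?_, ?_, ?_, ?_, ?_, ?_, ?_, ?_, ?_⟩, fun X g => rfl⟩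
  -- mu_add
  · intro n a i x y
    funext h
    rw [Pi.add_apply, skew_mu_apply, skew_mu_apply, skew_mu_apply, ← Finset.sum_add_distrib]
    apply Finset.sum_congr rfl
    intro g _
    by_cases hg : ordProd G g = h
    · rw [if_pos hg, if_pos hg, if_pos hg]
      apply mu_congr_add hA _ _ _ i
      · intro l hl
        constructor <;> rw [Function.update_of_ne hl, Function.update_of_ne hl]
      · rw [Function.update_self, Function.update_self, Function.update_self,
          Pi.add_apply, map_add]
    · rw [if_neg hg, if_neg hg, if_neg hg, add_zero]
  -- mu_smul
  · intro n a i c x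
    funext h
    rw [Pi.smul_apply, skew_mu_apply, skew_mu_apply, Finset.smul_sum]
    apply Finset.sum_congr rfl
    intro g _
    by_cases hg : ordProd G g = h
    · rw [if_pos hg, if_pos hg]
      apply mu_congr_smul hA _ _ i
      · intro l hl
        rw [Function.update_of_ne hl, Function.update_of_ne hl]
      · rw [Function.update_self, Function.update_self, Pi.smul_apply, map_smul]
    · rw [if_neg hg, if_neg hg, smul_zero]
  -- mu_hom
  · intro n X a ha
    rw [Submodule.mem_pi]
    intro h _
    rw [skew_mu_apply]
    apply Submodule.sum_mem
    intro g _
    by_cases hg : ordProd G g = h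
    · rw [if_pos hg]
      have hm : A.mu n (fun i => σ.map (suffixProd G g i) (a i (g i))) ∈
          A.hom (σ.obj (pf g (((0 : Fin (n + 1))) : ℕ)) (X 0))
            (σ.obj (pf g ((Fin.last n : Fin (n + 1)) : ℕ)) (X (Fin.last n))) :=
        hA.mu_hom n (fun l => σ.obj (pf g (l : ℕ)) (X l)) _
          (fun i => skew_chain_mem σ hA X a ha g i)
      have e0 : σ.obj (pf g (((0 : Fin (n + 1))) : ℕ)) (X 0) = σ.obj h (X 0) := by
        rw [Fin.val_zero, ← ordProd_eq_pf, hg]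
      have e1 : σ.obj (pf g ((Fin.last n : Fin (n + 1)) : ℕ)) (X (Fin.last n))
          = X (Fin.last n) := by
        rw [Fin.val_last, pf_le g (le_refl n), σ.obj_one]
      rw [e0, e1] at hm
      exact hm
    · rw [if_neg hg]
      exact Submodule.zero_mem _
  -- mu_grade
  · intro n d a ha
    rw [Submodule.mem_pi]
    intro h _
    rw [skew_mu_apply]
    apply Submodule.sum_mem
    intro g _
    by_cases hg : ordProd G g = h
    · rw [if_pos hg]
      apply hA.mu_grade n d
      intro i
      have h2 := ha i
      rw [Submodule.mem_pi] at h2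
      exact σ.map_grade _ _ _ (h2 (g i) (Set.mem_univ _))
    · rw [if_neg hg]
      exact Submodule.zero_mem _
  -- stasheff
  · intro n X d a ha
    have haG : ∀ (i : Fin n) (γ : G),
        a i γ ∈ A.hom (σ.obj γ (X i.castSucc)) (X i.succ) ∧ a i γ ∈ A.grade (d i) := by
      intro i γ
      obtain ⟨h1, h2⟩ := Submodule.mem_inf.mp (ha i)
      rw [Submodule.mem_pi] at h1 h2
      exact ⟨h1 γ (Set.mem_univ _), h2 γ (Set.mem_univ _)⟩
    funext h
    have hterm : ∀ k j : ℕ,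
        (if hcx : 1 ≤ j ∧ k + j ≤ n then
          ((-1 : K) ^ (∑ i : Fin n, if (i : ℕ) < k then d i - 1 else 0)) •
            (skewGroup K G A σ).mu (n - j + 1) (fun i : Fin (n - j + 1) =>
              if hik : (i : ℕ) < k then a ⟨(i : ℕ), by omega⟩
              else if (i : ℕ) = k then
                (skewGroup K G A σ).mu j
                  (fun t : Fin j => a ⟨k + (t : ℕ), by have ht := t.isLt; omega⟩)
              else a ⟨(i : ℕ) + j - 1, by have := i.isLt; omega⟩)
        else 0) h = ∑ g : Fin n → G, stashTerm σ n d a h k j g := by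
      intro k j
      by_cases hc : 1 ≤ j ∧ k + j ≤ n
      · rw [dif_pos hc]
        rw [Pi.smul_apply, skew_core σ hA n k j hc.1 hc.2 a h, Finset.smul_sum]
        apply Finset.sum_congr rfl
        intro g _
        simp only [stashTerm]
        rw [dif_pos hc]
        by_cases hg : ordProd G g = h
        · rw [if_pos hg, if_pos hg]
        · rw [if_neg hg, if_neg hg, smul_zero]
      · rw [dif_neg hc]
        show (0 : G → A.M) h = _
        rw [Pi.zero_apply]
        symm
        apply Finset.sum_eq_zero
        intro g _
        simp only [stashTerm]
        rw [dif_neg hc]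
    refine Eq.trans (Finset.sum_apply h _ _) ?_
    refine Eq.trans (Finset.sum_congr rfl (fun k _ =>
      Eq.trans (Finset.sum_apply h _ _)
        (Finset.sum_congr rfl (fun j _ => hterm k j)))) ?_
    refine Eq.trans (Finset.sum_congr rfl (fun k _ => Finset.sum_comm)) ?_
    refine Eq.trans Finset.sum_comm ?_
    show (∑ g : Fin n → G, ∑ k ∈ Finset.range (n + 1), ∑ j ∈ Finset.range (n + 1),
      stashTerm σ n d a h k j g) = (0 : A.M)
    apply Finset.sum_eq_zero
    intro g _
    by_cases hg : ordProd G g = h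
    · refine Eq.trans (Finset.sum_congr rfl (fun k _ => Finset.sum_congr rfl (fun j _ => ?_)))
        (hA.stasheff n (fun l => σ.obj (pf g ((l : Fin (n + 1)) : ℕ)) (X l)) d
          (fun i => σ.map (suffixProd G g i) (a i (g i))) ?_)
      · by_cases hc : 1 ≤ j ∧ k + j ≤ n
        · simp only [stashTerm]
          rw [dif_pos hc, dif_pos hc, if_pos hg]
        · simp only [stashTerm]
          rw [dif_neg hc, dif_neg hc]
      · intro i
        rw [Submodule.mem_inf]
        constructor
        · exact skew_chain_mem σ hA X a (fun i' => (Submodule.mem_inf.mp (ha i')).1) g i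
        · exact σ.map_grade _ _ _ (haG i (g i)).2
    · apply Finset.sum_eq_zero
      intro k _
      apply Finset.sum_eq_zero
      intro j _
      simp only [stashTerm]
      by_cases hc : 1 ≤ j ∧ k + j ≤ n
      · rw [dif_pos hc, if_neg hg]
      · rw [dif_neg hc]
  -- unit_mem
  · intro X
    rw [Submodule.mem_inf]
    constructor <;> (rw [Submodule.mem_pi]; intro γ _; rw [skew_unit_apply])
    · by_cases hγ : γ = 1
      · rw [if_pos hγ, hγ, σ.obj_one]
        exact (Submodule.mem_inf.mp (hA.unit_mem X)).1
      · rw [if_neg hγ]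
        exact Submodule.zero_mem _
    · by_cases hγ : γ = 1
      · rw [if_pos hγ]
        exact (Submodule.mem_inf.mp (hA.unit_mem X)).2
      · rw [if_neg hγ]
        exact Submodule.zero_mem _
  -- mu_one_unit
  · intro X
    funext h
    rw [skew_mu_apply, Pi.zero_apply]
    apply Finset.sum_eq_zero
    intro g _
    by_cases hg : ordProd G g = h
    · rw [if_pos hg]
      by_cases h0 : g 0 = 1
      · have e : (fun i : Fin 1 => σ.map (suffixProd G g i)
            ((![(skewGroup K G A σ).unit X]) i (g i)))
            = ![A.unit (σ.obj (suffixProd G g 0) X)] := by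
          funext i
          have hi : i = 0 := Subsingleton.elim i 0
          subst hi
          rw [Matrix.cons_val_fin_one, Matrix.cons_val_fin_one, skew_unit_apply,
            if_pos h0, σ.map_unit]
        rw [e, hA.mu_one_unit]
      · apply mu_slot_zero hA _ (0 : Fin 1)
        show σ.map (suffixProd G g 0) ((![(skewGroup K G A σ).unit X]) 0 (g 0)) = 0
        rw [Matrix.cons_val_fin_one, skew_unit_apply, if_neg h0, map_zero]
    · rw [if_neg hg]
  -- mu_two_unit_right
  · intro X Y a ha
    funext h
    rw [skew_mu_apply]
    have hmem : ∀ γ : G, a γ ∈ A.hom (σ.obj γ X) Y := by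
      intro γ
      rw [Submodule.mem_pi] at ha
      exact ha γ (Set.mem_univ _)
    have hord : ∀ g : Fin 2 → G, ordProd G g = g 1 * g 0 := by
      intro g
      simp [ordProd, List.ofFn_succ]
    have main : (if ordProd G (![1, h] : Fin 2 → G) = h then
        A.mu 2 (fun i => σ.map (suffixProd G (![1, h] : Fin 2 → G) i)
          ((![(skewGroup K G A σ).unit X, a]) i ((![1, h] : Fin 2 → G) i))) else 0) = a h := by
      rw [if_pos (by rw [hord]; simp)]
      have e : (fun i : Fin 2 => σ.map (suffixProd G (![1, h] : Fin 2 → G) i)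
          ((![(skewGroup K G A σ).unit X, a]) i ((![1, h] : Fin 2 → G) i)))
          = ![A.unit (σ.obj h X), a h] := by
        funext i
        have hsuf0 : suffixProd G (![1, h] : Fin 2 → G) 0 = h := by
          simp [suffixProd, List.ofFn_succ]
        have hsuf1 : suffixProd G (![1, h] : Fin 2 → G) 1 = 1 := by
          simp [suffixProd, List.ofFn_succ]
        fin_cases i
        · show σ.map (suffixProd G (![1, h] : Fin 2 → G) 0)
            ((skewGroup K G A σ).unit X ((![1, h] : Fin 2 → G) 0)) = A.unit (σ.obj h X)
          rw [skew_unit_apply]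
          simp only [Matrix.cons_val_zero]
          rw [if_pos trivial, σ.map_unit, hsuf0]
        · show σ.map (suffixProd G (![1, h] : Fin 2 → G) 1)
            (a ((![1, h] : Fin 2 → G) 1)) = a h
          simp only [Matrix.cons_val_one, Matrix.head_cons]
          rw [hsuf1, σ.map_one]
          rfl
      rw [e]
      exact hA.mu_two_unit_right (σ.obj h X) Y (a h) (hmem h)
    calc (∑ g : Fin 2 → G, if ordProd G g = h then
          A.mu 2 (fun i => σ.map (suffixProd G g i)
            ((![(skewGroup K G A σ).unit X, a]) i (g i))) else 0)
        = _ := Finset.sum_eq_single_of_mem (![1, h] : Fin 2 → G) (Finset.mem_univ _) ?_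
      _ = a h := main
    intro g _ hgne
    by_cases hg : ordProd G g = h
    · rw [if_pos hg]
      by_cases h0 : g 0 = 1
      · exfalso
        apply hgne
        funext i
        fin_cases i
        · show g 0 = (1 : G)
          exact h0
        · show g 1 = h
          rw [hord g, h0, mul_one] at hg
          exact hg
      · apply mu_slot_zero hA _ (0 : Fin 2)
        show σ.map (suffixProd G g 0) ((![(skewGroup K G A σ).unit X, a]) 0 (g 0)) = 0
        simp only [Matrix.cons_val_zero]
        rw [if_neg h0, map_zero]
    · rw [if_neg hg]
  -- mu_two_unit_left
  · intro X Y d a ha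
    funext h
    obtain ⟨ha1, ha2⟩ := Submodule.mem_inf.mp ha
    rw [Submodule.mem_pi] at ha1 ha2
    have hmem : a h ∈ A.hom (σ.obj h X) Y ⊓ A.grade d :=
      Submodule.mem_inf.mpr ⟨ha1 h (Set.mem_univ _), ha2 h (Set.mem_univ _)⟩
    rw [Pi.smul_apply, skew_mu_apply]
    have hord : ∀ g : Fin 2 → G, ordProd G g = g 1 * g 0 := by
      intro g
      simp [ordProd, List.ofFn_succ]
    have main : (if ordProd G (![h, 1] : Fin 2 → G) = h then
        A.mu 2 (fun i => σ.map (suffixProd G (![h, 1] : Fin 2 → G) i)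
          ((![a, (skewGroup K G A σ).unit Y]) i ((![h, 1] : Fin 2 → G) i))) else 0)
        = ((-1 : K) ^ d) • a h := by
      rw [if_pos (by rw [hord]; simp)]
      have hsuf0 : suffixProd G (![h, 1] : Fin 2 → G) 0 = 1 := by
        simp [suffixProd, List.ofFn_succ]
      have hsuf1 : suffixProd G (![h, 1] : Fin 2 → G) 1 = 1 := by
        simp [suffixProd, List.ofFn_succ]
      have e : (fun i : Fin 2 => σ.map (suffixProd G (![h, 1] : Fin 2 → G) i)
          ((![a, (skewGroup K G A σ).unit Y]) i ((![h, 1] : Fin 2 → G) i)))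
          = ![a h, A.unit Y] := by
        funext i
        fin_cases i
        · show σ.map (suffixProd G (![h, 1] : Fin 2 → G) 0)
            (a ((![h, 1] : Fin 2 → G) 0)) = a h
          simp only [Matrix.cons_val_zero]
          rw [hsuf0, σ.map_one]
          rfl
        · show σ.map (suffixProd G (![h, 1] : Fin 2 → G) 1)
            ((skewGroup K G A σ).unit Y ((![h, 1] : Fin 2 → G) 1)) = A.unit Y
          have e1 : ((![h, 1] : Fin 2 → G) 1) = 1 := rfl
          rw [skew_unit_apply, e1, if_pos rfl, hsuf1, σ.map_one]
          rfl
      rw [e]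
      exact hA.mu_two_unit_left (σ.obj h X) Y d (a h) hmem
    calc (∑ g : Fin 2 → G, if ordProd G g = h then
          A.mu 2 (fun i => σ.map (suffixProd G g i)
            ((![a, (skewGroup K G A σ).unit Y]) i (g i))) else 0)
        = _ := Finset.sum_eq_single_of_mem (![h, 1] : Fin 2 → G) (Finset.mem_univ _) ?_
      _ = ((-1 : K) ^ d) • a h := main
    intro g _ hgne
    by_cases hg : ordProd G g = h
    · rw [if_pos hg]
      by_cases h1 : g 1 = 1
      · exfalso
        apply hgne
        funext i
        fin_cases i
        · show g 0 = h
          rw [hord g, h1, one_mul] at hg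
          exact hg
        · show g 1 = (1 : G)
          exact h1
      · apply mu_slot_zero hA _ (1 : Fin 2)
        show σ.map (suffixProd G g 1) ((![a, (skewGroup K G A σ).unit Y]) 1 (g 1)) = 0
        simp only [Matrix.cons_val_one, Matrix.head_cons, Matrix.cons_val_zero]
        rw [if_neg h1, map_zero]
    · rw [if_neg hg]
  -- mu_unit_vanish
  · intro n h3 a i X hunit
    funext h
    rw [skew_mu_apply, Pi.zero_apply]
    apply Finset.sum_eq_zero
    intro g _
    by_cases hg : ordProd G g = h
    · rw [if_pos hg]
      by_cases h1 : g i = 1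
      · apply hA.mu_unit_vanish n h3 _ i (σ.obj (suffixProd G g i) X)
        show σ.map (suffixProd G g i) (a i (g i)) = A.unit (σ.obj (suffixProd G g i) X)
        rw [hunit, skew_unit_apply, if_pos h1, σ.map_unit]
      · apply mu_slot_zero hA _ i
        show σ.map (suffixProd G g i) (a i (g i)) = 0
        rw [hunit, skew_unit_apply, if_neg h1, map_zero]
    · rw [if_neg hg]
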